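/- Let (p_n)_{n≥0} be the real sequence defined by p_0 = 0 and p_n = (1/n) Σ_{j=0}^{n−1} (1 − p_j)(1 − p_{n−1−j}) for n ≥ 1. Then Σ_{k=0}^∞ 2 p_k / ((k+1)(k+2)) = 2(√5 − 3) ∫₀¹ (x^√5 − 1)/((3√5 − 7)x^√5 + 2) dx. -/

import Mathlib

open MeasureTheory ProbabilityTheory Filter Asymptotics

namespace BSTAux

open MeasureTheory Filter Set

lemma sqrt5_sq : Real.sqrt 5 ^ 2 = 5 := Real.sq_sqrt (by norm_num)

lemma sqrt5_lt_3 : Real.sqrt 5 < 3 := by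
  nlinarith [sqrt5_sq, Real.sqrt_nonneg 5]

lemma sqrt5_gt_2 : 2 < Real.sqrt 5 := by
  nlinarith [sqrt5_sq, Real.sqrt_nonneg 5]

lemma summable_aux {a : ℕ → ℝ} (ha : ∀ n, |a n| ≤ 1) {x : ℝ} (hx : |x| < 1) :
    Summable fun n => a n * x ^ n := by
  refine Summable.of_norm_bounded (summable_geometric_of_lt_one (abs_nonneg x) hx) fun n => ?_
  rw [norm_mul, norm_pow, Real.norm_eq_abs, Real.norm_eq_abs]
  exact mul_le_of_le_one_left (pow_nonneg (abs_nonneg x) n) (ha n)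

lemma summable_nat_mul_pow {r : ℝ} (h0 : 0 ≤ r) (h1 : r < 1) :
    Summable fun n : ℕ => (n : ℝ) * r ^ (n - 1) := by
  rw [← summable_nat_add_iff 1]
  simp only [Nat.add_sub_cancel]
  have h2 : Summable fun n : ℕ => (n : ℝ) * r ^ n := by
    simpa using summable_pow_mul_geometric_of_norm_lt_one 1
      (by rwa [Real.norm_eq_abs, abs_of_nonneg h0])
  have h3 := h2.add (summable_geometric_of_lt_one h0 h1)
  refine h3.congr fun n => ?_
  push_cast
  ring

lemma summable_deriv_aux {a : ℕ → ℝ} (ha : ∀ n, |a n| ≤ 1) {x : ℝ} (hx : |x| < 1) :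
    Summable fun n => a n * ((n : ℝ) * x ^ (n - 1)) := by
  refine Summable.of_norm_bounded (summable_nat_mul_pow (abs_nonneg x) hx) fun n => ?_
  rw [Real.norm_eq_abs, abs_mul, abs_mul, abs_pow, Nat.abs_cast]
  calc |a n| * ((n:ℝ) * |x| ^ (n-1)) ≤ 1 * ((n:ℝ) * |x| ^ (n-1)) := by
        apply mul_le_mul_of_nonneg_right (ha n); positivity
    _ = (n:ℝ) * |x| ^ (n-1) := one_mul _

/-- The generating function of `p`. -/
noncomputable def G (p : ℕ → ℝ) (x : ℝ) : ℝ := ∑' n, p n * x ^ n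

lemma hasDerivAt_G {p : ℕ → ℝ} (hp : ∀ n, |p n| ≤ 1) {x : ℝ} (hx : |x| < 1) :
    HasDerivAt (G p) (∑' n, p n * ((n : ℝ) * x ^ (n - 1))) x := by
  set r : ℝ := (1 + |x|) / 2 with hr
  have hxr : |x| < r := by rw [hr]; linarith
  have hr1 : r < 1 := by rw [hr]; linarith
  have hr0 : 0 < r := lt_of_le_of_lt (abs_nonneg x) hxr
  exact hasDerivAt_tsum_of_isPreconnected (u := fun n : ℕ => (n : ℝ) * r ^ (n - 1))
    (summable_nat_mul_pow hr0.le hr1) (isOpen_Ioo (a := -r) (b := r))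
    (convex_Ioo _ _).isPreconnected
    (fun n y _ => (hasDerivAt_pow n y).const_mul (p n))
    (fun n y hy => by
      have hyr : |y| ≤ r := (abs_lt.2 ⟨hy.1, hy.2⟩).le
      rw [Real.norm_eq_abs, abs_mul, abs_mul, abs_pow, Nat.abs_cast]
      calc |p n| * ((n:ℝ) * |y| ^ (n-1)) ≤ 1 * ((n:ℝ) * r ^ (n-1)) := by
            apply mul_le_mul (hp n) ?_ (by positivity) zero_le_one
            exact mul_le_mul_of_nonneg_left (pow_le_pow_left₀ (abs_nonneg y) hyr _)
              (Nat.cast_nonneg n)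
        _ = (n:ℝ) * r ^ (n-1) := one_mul _)
    (mem_Ioo.2 ⟨by linarith, hr0⟩)
    (summable_aux hp (by rw [abs_zero]; norm_num))
    (mem_Ioo.2 (abs_lt.1 hxr))


lemma hasDerivAt_G_ode {p : ℕ → ℝ} (hp : ∀ n, p n ∈ Set.Icc (0:ℝ) 1)
    (hrec' : ∀ n : ℕ, ((n : ℝ) + 1) * p (n + 1)
      = ∑ j ∈ Finset.range (n + 1), (1 - p j) * (1 - p (n - j)))
    {x : ℝ} (hx : |x| < 1) :
    HasDerivAt (G p) (((1 - x)⁻¹ - G p x) ^ 2) x := by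
  have hpa : ∀ n, |p n| ≤ 1 := fun n => abs_le.2 ⟨by linarith [(hp n).1], (hp n).2⟩
  have hqa : ∀ n, |1 - p n| ≤ 1 := fun n => abs_le.2 ⟨by linarith [(hp n).2], by linarith [(hp n).1]⟩
  have h := hasDerivAt_G hpa hx
  have hqs : Summable fun n => ‖(1 - p n) * x ^ n‖ := (summable_aux hqa hx).abs
  have hC := tsum_mul_tsum_eq_tsum_sum_range_of_summable_norm hqs hqs
  have hinner : ∀ n : ℕ, ∑ k ∈ Finset.range (n + 1), ((1 - p k) * x ^ k) * ((1 - p (n - k)) * x ^ (n - k))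
      = ((n : ℝ) + 1) * p (n + 1) * x ^ n := by
    intro n
    rw [hrec', Finset.sum_mul]
    refine Finset.sum_congr rfl fun k hk => ?_
    have hkn : k ≤ n := Nat.lt_succ_iff.1 (Finset.mem_range.1 hk)
    rw [show ((1 - p k) * x ^ k) * ((1 - p (n - k)) * x ^ (n - k))
        = (1 - p k) * (1 - p (n - k)) * (x ^ k * x ^ (n - k)) by ring,
      ← pow_add, Nat.add_sub_cancel' hkn]
  have hgeo : ∑' n : ℕ, x ^ n = (1 - x)⁻¹ :=
    tsum_geometric_of_norm_lt_one (by rwa [Real.norm_eq_abs])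
  have hgs : Summable fun n : ℕ => x ^ n := summable_geometric_of_norm_lt_one (by rwa [Real.norm_eq_abs])
  have hsplit : ∑' n, (1 - p n) * x ^ n = (1 - x)⁻¹ - G p x := by
    rw [← hgeo, G, ← Summable.tsum_sub hgs (summable_aux hpa hx)]
    exact tsum_congr fun n => by ring
  have hval : ∑' n, p n * ((n : ℝ) * x ^ (n - 1)) = ((1 - x)⁻¹ - G p x) ^ 2 := by
    rw [Summable.tsum_eq_zero_add (summable_deriv_aux hpa hx)]
    simp only [Nat.cast_zero, pow_zero, zero_mul, mul_zero, zero_add, Nat.add_sub_cancel]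
    rw [show (((1 - x)⁻¹ - G p x) ^ 2 : ℝ) = ((1-x)⁻¹ - G p x) * ((1-x)⁻¹ - G p x) by ring,
      ← hsplit, hC]
    refine tsum_congr fun n => ?_
    rw [hinner]
    push_cast
    ring
  rwa [hval] at h

section Key
variable {p : ℕ → ℝ}

lemma abs_aux1 (hp : ∀ n, p n ∈ Set.Icc (0:ℝ) 1) : ∀ n, |p n| ≤ 1 := fun n => abs_le.2 ⟨by linarith [(hp n).1], (hp n).2⟩

lemma G_nonneg (hp : ∀ n, p n ∈ Set.Icc (0:ℝ) 1) {x : ℝ} (hx : x ∈ Set.Ico (0:ℝ) 1) : 0 ≤ G p x :=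
  tsum_nonneg fun n => mul_nonneg (hp n).1 (pow_nonneg hx.1 n)

lemma G_le (hp : ∀ n, p n ∈ Set.Icc (0:ℝ) 1) {x : ℝ} (hx : x ∈ Set.Ico (0:ℝ) 1) : (1 - x) * G p x ≤ 1 := by
  have h1 : G p x ≤ (1 - x)⁻¹ := by
    rw [← tsum_geometric_of_lt_one hx.1 hx.2]
    refine Summable.tsum_le_tsum (fun n => ?_)
      (summable_aux (abs_aux1 hp) (by rw [abs_of_nonneg hx.1]; exact hx.2))
      (summable_geometric_of_lt_one hx.1 hx.2)
    exact mul_le_of_le_one_left (pow_nonneg hx.1 n) (hp n).2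
  have h2 : (0:ℝ) < 1 - x := by linarith [hx.2]
  calc (1 - x) * G p x ≤ (1 - x) * (1 - x)⁻¹ := by
        exact mul_le_mul_of_nonneg_left h1 h2.le
    _ = 1 := mul_inv_cancel₀ h2.ne'

/-- derivative of `u y = 1 - (1-y) * G p y`. -/
lemma hasDerivAt_u (hp : ∀ n, p n ∈ Set.Icc (0:ℝ) 1)
    (hrec' : ∀ n : ℕ, ((n : ℝ) + 1) * p (n + 1)
      = ∑ j ∈ Finset.range (n + 1), (1 - p j) * (1 - p (n - j))) {x : ℝ} (hx : x ∈ Set.Ico (0:ℝ) 1) :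
    HasDerivAt (fun y => 1 - (1 - y) * G p y)
      ((1 - (1 - (1-x) * G p x) - (1 - (1-x) * G p x)^2) / (1-x)) x := by
  have hx1 : |x| < 1 := by rw [abs_of_nonneg hx.1]; exact hx.2
  have he : (0:ℝ) < 1 - x := by linarith [hx.2]
  have hG := hasDerivAt_G_ode hp hrec' hx1
  have h1 : HasDerivAt (fun y : ℝ => 1 - y) (-1) x := by
    simpa using (hasDerivAt_id x).const_sub 1
  have h2 := (h1.mul hG).const_sub 1
  refine h2.congr_deriv (Eq.symm ?_)
  field_simp
  ring
end Key

section Psi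
variable {p : ℕ → ℝ}

/-- the combination that is conserved -/
noncomputable def psi (p : ℕ → ℝ) (y : ℝ) : ℝ :=
  (1 - y) ^ Real.sqrt 5 * ((1 - (1 - y) * G p y) - (-(Real.sqrt 5 + 1)/2))
    - (7 + 3*Real.sqrt 5)/2 * ((1 - (1 - y) * G p y) - (Real.sqrt 5 - 1)/2)

lemma hasDerivAt_psi (hp : ∀ n, p n ∈ Set.Icc (0:ℝ) 1)
    (hrec' : ∀ n : ℕ, ((n : ℝ) + 1) * p (n + 1)
      = ∑ j ∈ Finset.range (n + 1), (1 - p j) * (1 - p (n - j))) {x : ℝ} (hx : x ∈ Set.Ico (0:ℝ) 1) :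
    HasDerivAt (psi p)
      (-(psi p x) * ((1 - (1 - x) * G p x) - (-(Real.sqrt 5 + 1)/2)) / (1-x)) x := by
  have he : (0:ℝ) < 1 - x := by linarith [hx.2]
  set s : ℝ := Real.sqrt 5 with hs
  have hu := hasDerivAt_u hp hrec' hx
  set U : ℝ := (1 - (1 - (1-x) * G p x) - (1 - (1-x) * G p x)^2) / (1-x) with hU
  have ht : HasDerivAt (fun y : ℝ => (1 - y) ^ s) (s * (1-x) ^ (s-1) * (-1)) x := by
    have h1 : HasDerivAt (fun y : ℝ => 1 - y) (-1) x := by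
      simpa using (hasDerivAt_id x).const_sub 1
    exact (Real.hasDerivAt_rpow_const (x := 1 - x) (p := s) (Or.inl he.ne')).comp x h1
  have H1 := ht.mul (hu.sub_const (-(s+1)/2))
  have H2 := (hu.sub_const ((s-1)/2)).const_mul ((7 + 3*s)/2)
  have H := H1.sub H2
  have hpow : (1-x) ^ (s-1) = (1-x) ^ s / (1-x) := Real.rpow_sub_one he.ne' s
  have halg : ∀ T u t : ℝ, t^2 = 5 →
      t * T * (-1) * (u - -(t+1)/2) + (T - (7+3*t)/2) * (1 - u - u^2)
        = -(T * (u - -(t+1)/2) - (7+3*t)/2 * (u - (t-1)/2)) * (u - -(t+1)/2) := by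
    intro T u t ht
    linear_combination (3*t/8 - T/4 + 7/8) * ht
  refine H.congr_deriv (Eq.symm ?_)
  rw [hU, hpow]
  simp only [psi, ← hs]
  have hs2 : s^2 = 5 := by rw [hs]; exact sqrt5_sq
  have h := halg ((1-x)^s) (1 - (1-x) * G p x) s hs2
  linear_combination h * (1-x)⁻¹ + (1-x)⁻¹ * ((1-x)^s/2 - 3*s/4 - 7/4) * hs2


lemma psi_zero (h0 : p 0 = 0) : psi p 0 = 0 := by
  have hG0 : G p 0 = 0 := by
    rw [G]
    rw [tsum_eq_single 0 (fun n hn => by simp [zero_pow hn])]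
    simp [h0]
  simp only [psi, hG0]
  rw [show (1:ℝ)-0 = 1 by norm_num, Real.one_rpow]
  linear_combination (3/4 : ℝ) * sqrt5_sq

lemma psi_eq_zero (hp : ∀ n, p n ∈ Set.Icc (0:ℝ) 1)
    (hrec' : ∀ n : ℕ, ((n : ℝ) + 1) * p (n + 1)
      = ∑ j ∈ Finset.range (n + 1), (1 - p j) * (1 - p (n - j)))
    (h0 : p 0 = 0) {x : ℝ} (hx : x ∈ Set.Ico (0:ℝ) 1) : psi p x = 0 := by
  set s : ℝ := Real.sqrt 5 with hs
  have hbound : ∀ y, y ∈ Set.Ico (0:ℝ) x →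
      ‖-(psi p y) * ((1 - (1 - y) * G p y) - (-(s + 1)/2)) / (1-y)‖
        ≤ 3/(1-x) * ‖psi p y‖ + 0 := by
    intro y hy
    have hy1 : y ∈ Set.Ico (0:ℝ) 1 := ⟨hy.1, hy.2.trans hx.2⟩
    have he : (0:ℝ) < 1 - x := by linarith [hx.2]
    have hey : (0:ℝ) < 1 - y := by linarith [hy1.2]
    have hu0 : 0 ≤ (1 - y) * G p y := mul_nonneg hey.le (G_nonneg hp hy1)
    have hu1 : (1 - y) * G p y ≤ 1 := G_le hp hy1
    have hs3 : s < 3 := sqrt5_lt_3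
    have hs2 : 2 < s := sqrt5_gt_2
    have habs : |(1 - (1 - y) * G p y) - (-(s + 1)/2)| ≤ 3 := by
      rw [abs_le]; constructor <;> nlinarith
    rw [norm_div, norm_mul, norm_neg, Real.norm_eq_abs, Real.norm_eq_abs, Real.norm_eq_abs,
      abs_of_pos hey, add_zero]
    rw [div_le_iff₀ hey]
    calc ‖psi p y‖ * |(1 - (1 - y) * G p y) - (-(s + 1)/2)|
        ≤ ‖psi p y‖ * 3 := mul_le_mul_of_nonneg_left habs (norm_nonneg _)
      _ = 3 * ‖psi p y‖ * ((1-x)/(1-x)) := by field_simp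
      _ ≤ 3 / (1-x) * ‖psi p y‖ * (1 - y) := by
          rw [show 3 * ‖psi p y‖ * ((1-x)/(1-x)) = 3/(1-x) * ‖psi p y‖ * (1-x) by ring]
          apply mul_le_mul_of_nonneg_left (by linarith [hy.2])
          positivity
  have hcont : ContinuousOn (psi p) (Set.Icc 0 x) := by
    intro y hy
    have hy1 : y ∈ Set.Ico (0:ℝ) 1 := ⟨hy.1, lt_of_le_of_lt hy.2 hx.2⟩
    exact (hasDerivAt_psi hp hrec' hy1).continuousAt.continuousWithinAt
  have hderiv : ∀ y ∈ Set.Ico (0:ℝ) x, HasDerivWithinAt (psi p)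
      ((fun z => -(psi p z) * ((1 - (1 - z) * G p z) - (-(s + 1)/2)) / (1-z)) y) (Set.Ici y) y := by
    intro y hy
    have hy1 : y ∈ Set.Ico (0:ℝ) 1 := ⟨hy.1, hy.2.trans hx.2⟩
    exact (hasDerivAt_psi hp hrec' hy1).hasDerivWithinAt
  have h := norm_le_gronwallBound_of_norm_deriv_right_le (δ := 0) (K := 3/(1-x)) (ε := 0)
    hcont hderiv (by rw [psi_zero h0]; simp) hbound x ⟨hx.1, le_refl x⟩
  rw [gronwallBound_ε0_δ0] at h
  simpa using le_antisymm h (norm_nonneg _)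

/-- The closed-form for the generating function. -/
lemma key_formula (hp : ∀ n, p n ∈ Set.Icc (0:ℝ) 1)
    (hrec' : ∀ n : ℕ, ((n : ℝ) + 1) * p (n + 1)
      = ∑ j ∈ Finset.range (n + 1), (1 - p j) * (1 - p (n - j)))
    (h0 : p 0 = 0) {x : ℝ} (hx : x ∈ Set.Ico (0:ℝ) 1) :
    ((7 + 3*Real.sqrt 5)/2 - (1-x) ^ Real.sqrt 5) * ((1-x) * G p x)
      = (3 + Real.sqrt 5)/2 * (1 - (1-x) ^ Real.sqrt 5) := by
  have h := psi_eq_zero hp hrec' h0 hx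
  simp only [psi] at h
  linear_combination h - (3/4 : ℝ) * sqrt5_sq

end Psi

lemma mem01 (p : ℕ → ℝ) (h0 : p 0 = 0)
    (hrec : ∀ n : ℕ, 1 ≤ n →
      p n = (1 / (n : ℝ)) * ∑ j ∈ Finset.range n, (1 - p j) * (1 - p (n - 1 - j))) :
    ∀ n, p n ∈ Set.Icc (0:ℝ) 1 := by
  intro n
  induction n using Nat.strong_induction_on with
  | _ n ih =>
    match n with
    | 0 => rw [h0]; exact ⟨le_refl 0, zero_le_one⟩
    | Nat.succ m =>
      rw [hrec (m+1) (by omega)]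
      have hterm : ∀ j ∈ Finset.range (m+1),
          (0:ℝ) ≤ (1 - p j) * (1 - p (m+1-1-j)) ∧ (1 - p j) * (1 - p (m+1-1-j)) ≤ 1 := by
        intro j hj
        have hj' : j < m + 1 := Finset.mem_range.1 hj
        have h1 := ih j (by omega)
        have h2 := ih (m+1-1-j) (by omega)
        constructor
        · exact mul_nonneg (by linarith [h1.2]) (by linarith [h2.2])
        · nlinarith [h1.1, h1.2, h2.1, h2.2]
      have hsum0 : (0:ℝ) ≤ ∑ j ∈ Finset.range (m+1), (1 - p j) * (1 - p (m+1-1-j)) :=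
        Finset.sum_nonneg fun j hj => (hterm j hj).1
      have hsum1 : ∑ j ∈ Finset.range (m+1), (1 - p j) * (1 - p (m+1-1-j))
          ≤ ((m:ℝ)+1) := by
        calc ∑ j ∈ Finset.range (m+1), (1 - p j) * (1 - p (m+1-1-j))
            ≤ ∑ _j ∈ Finset.range (m+1), (1:ℝ) :=
              Finset.sum_le_sum fun j hj => (hterm j hj).2
          _ = ((m:ℝ)+1) := by simp
      have hc : ((m+1 : ℕ) : ℝ) = (m:ℝ)+1 := by push_cast; ring
      rw [hc]
      have hpos : (0:ℝ) < (m:ℝ)+1 := by positivity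
      constructor
      · positivity
      · rw [div_mul_eq_mul_div, one_mul, div_le_one hpos]; exact hsum1

theorem main (p : ℕ → ℝ) (h0 : p 0 = 0)
    (hrec : ∀ n : ℕ, 1 ≤ n →
      p n = (1 / (n : ℝ)) * ∑ j ∈ Finset.range n, (1 - p j) * (1 - p (n - 1 - j))) :
    HasSum (fun k : ℕ => 2 * p k / (((k : ℝ) + 1) * ((k : ℝ) + 2)))
      (2 * (Real.sqrt 5 - 3) *
        ∫ x in (0:ℝ)..1,
          (x ^ Real.sqrt 5 - 1) / ((3 * Real.sqrt 5 - 7) * x ^ Real.sqrt 5 + 2)) := by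
  have hp : ∀ n, p n ∈ Set.Icc (0:ℝ) 1 := mem01 p h0 hrec
  have hrec' : ∀ n : ℕ, ((n:ℝ)+1) * p (n+1)
      = ∑ j ∈ Finset.range (n+1), (1-p j)*(1-p (n-j)) := by
    intro n
    have h := hrec (n+1) (by omega)
    simp only [Nat.add_sub_cancel] at h
    rw [h]
    have hne : ((n+1:ℕ):ℝ) ≠ 0 := by positivity
    push_cast at hne ⊢
    field_simp
  set s : ℝ := Real.sqrt 5 with hs
  -- summability
  have hmaj : Summable (fun k : ℕ => 2 / (((k:ℝ)+1) * ((k:ℝ)+2))) := by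
    have h1 : Summable (fun k : ℕ => 1/((k:ℝ)+1)^2) := by
      have h2 := Real.summable_one_div_nat_pow.2 (by norm_num : 1 < 2)
      have h3 := (summable_nat_add_iff 1).2 h2
      exact h3.congr fun k => by push_cast; ring
    refine (h1.mul_left 2).of_nonneg_of_le (fun k => by positivity) fun k => ?_
    rw [div_le_iff₀ (by positivity)]
    have : ((k:ℝ)+1)^2 ≤ ((k:ℝ)+1)*((k:ℝ)+2) := by nlinarith [Nat.cast_nonneg (α := ℝ) k]
    calc (2:ℝ) = 2 * (1/((k:ℝ)+1)^2) * ((k:ℝ)+1)^2 := by field_simp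
      _ ≤ 2 * (1/((k:ℝ)+1)^2) * (((k:ℝ)+1)*((k:ℝ)+2)) := by
          apply mul_le_mul_of_nonneg_left this; positivity
  have hsa : Summable (fun k : ℕ => 2 * p k / (((k:ℝ)+1) * ((k:ℝ)+2))) := by
    refine hmaj.of_nonneg_of_le (fun k => ?_) fun k => ?_
    · have h1 := (hp k).1
      positivity
    · have h2 := (hp k).2
      have hD : (0:ℝ) < ((k:ℝ)+1)*((k:ℝ)+2) := by positivity
      gcongr
      linarith
  rw [hsa.hasSum_iff]
  have hIk : ∀ k : ℕ, ∫ x in (0:ℝ)..1, (x^k * (1-x)) = 1/(((k:ℝ)+1)*((k:ℝ)+2)) := by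
    intro k
    have heq : (fun x : ℝ => x^k*(1-x)) = fun x : ℝ => x^k - x^(k+1) := by funext x; ring
    rw [heq, intervalIntegral.integral_sub (intervalIntegral.intervalIntegrable_pow k)
      (intervalIntegral.intervalIntegrable_pow (k+1)), integral_pow, integral_pow]
    push_cast
    rw [one_pow, one_pow, zero_pow (by omega : k+1 ≠ 0), zero_pow (by omega : k+1+1 ≠ 0)]
    have h1 : ((k:ℝ)+1) ≠ 0 := by positivity
    have h2 : ((k:ℝ)+1+1) ≠ 0 := by positivity
    field_simp
    ring
  have hak : ∀ k : ℕ, ∫ x in Set.Ioc (0:ℝ) 1, 2 * p k * (x^k * (1-x))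
      = 2 * p k / (((k:ℝ)+1)*((k:ℝ)+2)) := by
    intro k
    rw [← intervalIntegral.integral_of_le zero_le_one,
      intervalIntegral.integral_const_mul, hIk]
    ring
  have hFint : ∀ k : ℕ, Integrable (fun x : ℝ => 2 * p k * (x^k * (1-x)))
      (volume.restrict (Set.Ioc 0 1)) := by
    intro k
    exact Continuous.integrableOn_Ioc (by continuity)
  have hnorm : ∀ k : ℕ, ∫ x in Set.Ioc (0:ℝ) 1, ‖2 * p k * (x^k * (1-x))‖
      = 2 * p k / (((k:ℝ)+1)*((k:ℝ)+2)) := by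
    intro k
    rw [← hak k]
    refine setIntegral_congr_fun measurableSet_Ioc fun x hx => ?_
    rw [Real.norm_eq_abs, abs_of_nonneg]
    have h1 := (hp k).1
    exact mul_nonneg (by linarith) (mul_nonneg (pow_nonneg hx.1.le k) (by linarith [hx.2]))
  have hFsum : Summable (fun k : ℕ => ∫ x in Set.Ioc (0:ℝ) 1, ‖2 * p k * (x^k * (1-x))‖) :=
    hsa.congr fun k => (hnorm k).symm
  have hswap := MeasureTheory.integral_tsum_of_summable_integral_norm hFint hFsum
  have htsum : ∀ x : ℝ, ∑' k, 2 * p k * (x^k * (1-x)) = 2*(1-x) * G p x := by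
    intro x
    show _ = 2*(1-x) * ∑' n, p n * x^n
    rw [← tsum_mul_left]
    exact tsum_congr fun k => by ring
  have hW : ∀ x ∈ Set.Ioo (0:ℝ) 1, 2*(1-x) * G p x
      = (3+s) * ((1 - (1-x)^s) / ((7+3*s)/2 - (1-x)^s)) := by
    intro x hx
    have hx' : x ∈ Set.Ico (0:ℝ) 1 := ⟨hx.1.le, hx.2⟩
    have hk := key_formula hp hrec' h0 hx'
    have hT1 : (1-x)^s ≤ 1 :=
      Real.rpow_le_one (by linarith [hx.2]) (by linarith [hx.1]) (Real.sqrt_nonneg 5)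
    have hR : (0:ℝ) < (7+3*s)/2 - (1-x)^s := by nlinarith [sqrt5_gt_2]
    rw [mul_div_assoc', eq_div_iff hR.ne']
    linear_combination 2*hk
  have hpt : ∀ x ∈ Set.Icc (0:ℝ) 1,
      (3+s)*((1 - x^s)/((7+3*s)/2 - x^s)) = 2*(s-3)*((x^s-1)/((3*s-7)*x^s+2)) := by
    intro x hx
    have hX0 : 0 ≤ x^s := Real.rpow_nonneg hx.1 s
    have hX1 : x^s ≤ 1 := Real.rpow_le_one hx.1 hx.2 (Real.sqrt_nonneg 5)
    have hs2 := sqrt5_gt_2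
    have hs3 := sqrt5_lt_3
    have hsq := sqrt5_sq
    have hs73 : 3*s - 7 < 0 := by nlinarith
    have hd1 : (0:ℝ) < (7+3*s)/2 - x^s := by nlinarith
    have hd2 : (0:ℝ) < (3*s-7)*x^s + 2 := by nlinarith
    have hne1 : (7 + 3*s - 2*x^s) ≠ 0 := by nlinarith
    have hne2 : ((3*s-7)*x^s + 2) ≠ 0 := hd2.ne'
    field_simp
    rw [div_eq_div_iff (by intro h; apply hne1; linarith) (by intro h; apply hne2; linarith)]
    have hs5 : s^2 = 5 := by rw [hs]; exact hsq
    linear_combination (3 - 3*(x^s)^2) * hs5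
  calc ∑' k, 2*p k/(((k:ℝ)+1)*((k:ℝ)+2))
      = ∑' k, ∫ x in Set.Ioc (0:ℝ) 1, 2 * p k * (x^k * (1-x)) :=
        tsum_congr fun k => (hak k).symm
    _ = ∫ x in Set.Ioc (0:ℝ) 1, ∑' k, 2 * p k * (x^k * (1-x)) := hswap
    _ = ∫ x in Set.Ioc (0:ℝ) 1, (3+s)*((1 - (1-x)^s)/((7+3*s)/2 - (1-x)^s)) := by
        rw [integral_Ioc_eq_integral_Ioo, integral_Ioc_eq_integral_Ioo]
        refine setIntegral_congr_fun measurableSet_Ioo fun x hx => ?_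
        rw [htsum x, hW x hx]
    _ = ∫ x in (0:ℝ)..1, (3+s)*((1 - (1-x)^s)/((7+3*s)/2 - (1-x)^s)) :=
        (intervalIntegral.integral_of_le zero_le_one).symm
    _ = ∫ x in (0:ℝ)..1, (3+s)*((1 - x^s)/((7+3*s)/2 - x^s)) := by
        have h := intervalIntegral.integral_comp_sub_left (a := (0:ℝ)) (b := 1)
          (fun y => (3+s)*((1 - y^s)/((7+3*s)/2 - y^s))) 1
        rw [show (1:ℝ)-1 = 0 by norm_num, show (1:ℝ)-0 = 1 by norm_num] at h
        exact h
    _ = ∫ x in (0:ℝ)..1, 2*(s-3)*((x^s-1)/((3*s-7)*x^s+2)) :=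
        intervalIntegral.integral_congr fun x hx =>
          hpt x (by rwa [Set.uIcc_of_le zero_le_one] at hx)
    _ = 2*(s-3)*∫ x in (0:ℝ)..1, (x^s-1)/((3*s-7)*x^s+2) := by
        rw [← intervalIntegral.integral_const_mul]

end BSTAux

/-- For the sequence `p` defined by `p₀ = 0` and
`pₙ = (1/n) Σ_{j=0}^{n-1} (1 - pⱼ)(1 - p_{n-1-j})` for `n ≥ 1`, we have
`Σ_{k≥0} 2pₖ/((k+1)(k+2)) = 2(√5 - 3) ∫₀¹ (x^√5 - 1)/((3√5 - 7)x^√5 + 2) dx`. -/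
theorem bst_mean_constant_integral (p : ℕ → ℝ) (h0 : p 0 = 0)
    (hrec : ∀ n : ℕ, 1 ≤ n →
      p n = (1 / (n : ℝ)) * ∑ j ∈ Finset.range n, (1 - p j) * (1 - p (n - 1 - j))) :
    HasSum (fun k : ℕ => 2 * p k / (((k : ℝ) + 1) * ((k : ℝ) + 2)))
      (2 * (Real.sqrt 5 - 3) *
        ∫ x in (0:ℝ)..1,
          (x ^ Real.sqrt 5 - 1) / ((3 * Real.sqrt 5 - 7) * x ^ Real.sqrt 5 + 2)) :=
  BSTAux.main p h0 hrec
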